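/- Let N ≥ 2, let 𝒜 be an N-mode complex array with mode sizes D_1,…,D_N, let U^{(p)} be a unitary D_p × D_p complex matrix for each p, and let ℬ = 𝒜 ×_1 U^{(1)} ×_2 ⋯ ×_N U^{(N)}. Then for every 1 ≤ k ≤ N−1, all disjoint index tuples R = (r_1,…,r_k), C = (c_1,…,c_{N−k}) whose union is {1,…,N}, and all n ∈ {1,…,k}, m ∈ {1,…,N−k}: ‖𝐁_{(R,n;C,m)}‖_tr = ‖𝐀_{(R,n;C,m)}‖_tr. -/

import Mathlib

open Matrix ComplexOrder

/-- The trace norm `‖A‖_tr = Tr((A†A)^{1/2})` of a complex matrix (the sum of its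
singular values). -/
noncomputable def traceNorm {m n : Type*} [Fintype m] [Fintype n] [DecidableEq n]
    (A : Matrix m n ℂ) : ℝ :=
  (((Matrix.posSemidef_conjTranspose_mul_self A).isHermitian.eigenvectorUnitary : Matrix n n ℂ) *
      diagonal (((↑) : ℝ → ℂ) ∘ Real.sqrt ∘ (Matrix.posSemidef_conjTranspose_mul_self A).isHermitian.eigenvalues) *
      (star (Matrix.posSemidef_conjTranspose_mul_self A).isHermitian.eigenvectorUnitary :
        Matrix n n ℂ)).trace.re

/-- The (0-based) mixed-radix row index of Definition 1 of the paper: for mode sizes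
`D : Fin k → ℕ`, reference mode `n` (0-based), and a multi-index `i`, this is
`(∏_{t ≤ n} D t)·∑_{s > n} i_s·(∏_{t > s} D t) + ∑_{s ≤ n} i_s·(∏_{s < t ≤ n} D t)`. -/
def mixIdx {k : ℕ} (D : Fin k → ℕ) (n : ℕ) (i : ∀ s, Fin (D s)) : ℕ :=
  (∏ t ∈ Finset.univ.filter (fun t : Fin k => (t : ℕ) ≤ n), D t) *
      ∑ s ∈ Finset.univ.filter (fun s : Fin k => n < (s : ℕ)),
        (i s : ℕ) * ∏ t ∈ Finset.univ.filter (fun t : Fin k => s < t), D t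
    + ∑ s ∈ Finset.univ.filter (fun s : Fin k => (s : ℕ) ≤ n),
        (i s : ℕ) * ∏ t ∈ Finset.univ.filter (fun t : Fin k => s < t ∧ (t : ℕ) ≤ n), D t

/-- The `n`-mode vectorization of a tensor with mode sizes `D : Fin k → ℕ`: the column
vector of length `∏ D s` whose entry in the row given by the mixed-radix index formula
(with reference mode `n`) is the corresponding entry of the tensor. -/
noncomputable def vecUnfold {k : ℕ} (D : Fin k → ℕ) (n : ℕ)
    (A : (∀ s, Fin (D s)) → ℂ) : Fin (∏ s, D s) → ℂ :=
  fun x => ∑ i : ∀ s, Fin (D s), if mixIdx D n i = (x : ℕ) then A i else 0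

/-- The mixed `(R,n;C,m)`-mode matrix unfolding of an `N`-mode tensor `A` with mode sizes
`D`, where the row modes are `r 0, …, r (k-1)`, the column modes are `c 0, …, c (l-1)`,
and `n`, `m` are the reference modes: the entry in row `mixIdx (D∘r) n (i∘r)` and column
`mixIdx (D∘c) m (i∘c)` is `A i`. -/
noncomputable def unfoldAmbient {N k l : ℕ} (D : Fin N → ℕ)
    (r : Fin k → Fin N) (c : Fin l → Fin N) (n m : ℕ)
    (A : (∀ p, Fin (D p)) → ℂ) :
    Matrix (Fin (∏ s, D (r s))) (Fin (∏ s, D (c s))) ℂ :=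
  Matrix.of fun x y => ∑ i : ∀ p, Fin (D p),
    if mixIdx (fun s => D (r s)) n (fun s => i (r s)) = (x : ℕ) ∧
        mixIdx (fun s => D (c s)) m (fun s => i (c s)) = (y : ℕ) then A i else 0

open scoped MatrixOrder in
lemma traceNorm_eq_sqrt {m n : Type*} [Fintype m] [Fintype n] [DecidableEq n]
    (A : Matrix m n ℂ) : traceNorm A = (CFC.sqrt (Aᴴ * A)).trace.re := by
  rw [traceNorm, CFC.sqrt_eq_real_sqrt _ (Matrix.posSemidef_conjTranspose_mul_self A).nonneg,
    cfcₙ_eq_cfc, (Matrix.posSemidef_conjTranspose_mul_self A).isHermitian.cfc_eq, IsHermitian.cfc,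
    Unitary.conjStarAlgAut_apply]
  rfl

open scoped MatrixOrder in
/-- trace norm is invariant under isometries on both sides -/
lemma traceNorm_mul_mul {ι₁ ι₂ κ₁ κ₂ : Type*} [Fintype ι₁] [Fintype ι₂] [Fintype κ₁] [Fintype κ₂]
    [DecidableEq κ₁] [DecidableEq κ₂] [DecidableEq ι₁]
    (U : Matrix ι₂ ι₁ ℂ) (V : Matrix κ₁ κ₂ ℂ) (hU : Uᴴ * U = 1) (hV : V * Vᴴ = 1)
    (M : Matrix ι₁ κ₁ ℂ) : traceNorm (U * M * V) = traceNorm M := by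
  set S := CFC.sqrt (Mᴴ * M) with hSdef
  have hS : S.PosSemidef := (CFC.sqrt_nonneg (Mᴴ * M)).posSemidef
  have hSsq : S * S = Mᴴ * M :=
    CFC.sqrt_mul_sqrt_self _ (Matrix.posSemidef_conjTranspose_mul_self M).nonneg
  have hconj : (U * M * V)ᴴ * (U * M * V) = Vᴴ * (Mᴴ * M) * V := by
    simp only [Matrix.conjTranspose_mul, Matrix.mul_assoc]
    rw [← Matrix.mul_assoc Uᴴ U, hU, Matrix.one_mul]
  have hT : (Vᴴ * S * V).PosSemidef := by
    have := hS.mul_mul_conjTranspose_same Vᴴ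
    rwa [Matrix.conjTranspose_conjTranspose] at this
  have hTsq : (Vᴴ * S * V) ^ 2 = (U * M * V)ᴴ * (U * M * V) := by
    rw [hconj, pow_two]
    calc Vᴴ * S * V * (Vᴴ * S * V) = Vᴴ * S * (V * Vᴴ) * S * V := by
          simp only [Matrix.mul_assoc]
      _ = Vᴴ * (Mᴴ * M) * V := by
          rw [hV, Matrix.mul_one, Matrix.mul_assoc Vᴴ S, hSsq, Matrix.mul_assoc]
  have key : CFC.sqrt ((U * M * V)ᴴ * (U * M * V)) = Vᴴ * S * V :=
    CFC.sqrt_unique (by rw [← pow_two, hTsq]) hT.nonneg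
  rw [traceNorm_eq_sqrt, traceNorm_eq_sqrt, key]
  rw [Matrix.trace_mul_cycle, hV, Matrix.one_mul]

lemma traceNorm_submatrix {ι₁ ι₂ κ₁ κ₂ : Type*} [Fintype ι₁] [Fintype ι₂] [Fintype κ₁]
    [Fintype κ₂] [DecidableEq κ₁] [DecidableEq κ₂] [DecidableEq ι₁]
    (e : ι₂ ≃ ι₁) (f : κ₂ ≃ κ₁) (M : Matrix ι₁ κ₁ ℂ) :
    traceNorm (M.submatrix e f) = traceNorm M := by
  have h1 : M.submatrix e f =
      ((1 : Matrix ι₁ ι₁ ℂ).submatrix e id) * M * ((1 : Matrix κ₁ κ₁ ℂ).submatrix id f) := by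
    ext x y
    simp [Matrix.mul_apply, Matrix.one_apply, ite_mul, mul_ite]
  rw [h1]
  apply traceNorm_mul_mul
  · have h2 : ((1 : Matrix ι₁ ι₁ ℂ).submatrix e id)ᴴ = (1 : Matrix ι₁ ι₁ ℂ).submatrix id e := by
      ext x y
      simp [Matrix.submatrix_apply, Matrix.one_apply, eq_comm]

    rw [h2, Matrix.submatrix_mul_equiv (1 : Matrix ι₁ ι₁ ℂ) (1 : Matrix ι₁ ι₁ ℂ) id e id]
    simp
  · have h2 : ((1 : Matrix κ₁ κ₁ ℂ).submatrix id f)ᴴ = (1 : Matrix κ₁ κ₁ ℂ).submatrix f id := by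
      ext x y
      simp [Matrix.submatrix_apply, Matrix.one_apply, eq_comm]

    rw [h2, Matrix.submatrix_mul_equiv (1 : Matrix κ₁ κ₁ ℂ) (1 : Matrix κ₁ κ₁ ℂ) id f id]
    simp

/-- The involution `x ↦ n - x` on `Fin k`. -/
def tau (k n : ℕ) [NeZero k] (hn : n < k) : Equiv.Perm (Fin k) :=
  Function.Involutive.toPerm (fun x => (⟨n, hn⟩ : Fin k) - x) (fun x => sub_sub_cancel _ x)

lemma tau_apply (k n : ℕ) [NeZero k] (hn : n < k) (x : Fin k) :
    tau k n hn x = (⟨n, hn⟩ : Fin k) - x := rfl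

lemma tau_symm (k n : ℕ) [NeZero k] (hn : n < k) : (tau k n hn).symm = tau k n hn :=
  Function.Involutive.toPerm_symm _

lemma tau_val (k n : ℕ) [NeZero k] (hn : n < k) (x : Fin k) :
    ((tau k n hn x : Fin k) : ℕ) = if (x : ℕ) ≤ n then n - x else n + k - x := by
  rw [tau_apply, Fin.sub_def]
  simp only
  rcases le_or_gt (x : ℕ) n with h | h
  · have h2 : k - (x : ℕ) + n = k + (n - x) := by omega
    rw [h2, Nat.add_mod_left, Nat.mod_eq_of_lt (by omega), if_pos h]
  · rw [if_neg (by omega), Nat.mod_eq_of_lt (by omega)]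
    omega

noncomputable def mixEquiv {k : ℕ} (D : Fin k → ℕ) (n : ℕ) (hn : n < k) :
    (∀ s, Fin (D s)) ≃ Fin (∏ s, D s) :=
  haveI : NeZero k := ⟨by omega⟩
  ((Equiv.piCongrLeft' (fun s => Fin (D s)) (tau k n hn).symm).trans finPiFinEquiv).trans
    (finCongr (by simp only [Equiv.symm_symm]; exact Equiv.prod_comp (tau k n hn) D))


lemma tau_tau (k n : ℕ) [NeZero k] (hn : n < k) (x : Fin k) :
    tau k n hn (tau k n hn x) = x := by
  rw [tau_apply, tau_apply]; exact sub_sub_cancel _ x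

lemma prod_tau_lt {k : ℕ} [NeZero k] (D : Fin k → ℕ) (n : ℕ) (hn : n < k) (j : Fin k) :
    (∏ j' : Fin (j : ℕ), D (tau k n hn (Fin.castLE j.2.le j'))) =
      ∏ t ∈ Finset.univ.filter (fun t : Fin k => (tau k n hn).symm t < j), D t := by
  refine Finset.prod_bij (fun j' _ => tau k n hn (Fin.castLE j.2.le j')) ?_ ?_ ?_ ?_
  · intro a _
    simp only [Finset.mem_filter, Finset.mem_univ, true_and, tau_symm, tau_tau]
    exact Fin.lt_def.mpr a.2
  · intro a _ b _ h
    have h2 := (tau k n hn).injective h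
    exact Fin.ext (congrArg Fin.val h2 :)
  · intro t ht
    simp only [Finset.mem_filter, Finset.mem_univ, true_and, tau_symm] at ht
    refine ⟨⟨((tau k n hn) t : ℕ), Fin.lt_def.mp ht⟩, Finset.mem_univ _, ?_⟩
    show tau k n hn (Fin.castLE j.2.le ⟨((tau k n hn) t : ℕ), Fin.lt_def.mp ht⟩) = t
    rw [show (Fin.castLE j.2.le ⟨((tau k n hn) t : ℕ), Fin.lt_def.mp ht⟩) =
      (tau k n hn) t from Fin.ext rfl, tau_tau]
  · intro a _
    rfl

lemma tau_lt_tau_iff_of_gt {k n : ℕ} [NeZero k] (hn : n < k) {s t : Fin k} (hs : n < (s : ℕ)) :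
    (tau k n hn t < tau k n hn s) ↔ ((t : ℕ) ≤ n ∨ s < t) := by
  have h1 := tau_val k n hn s
  have h2 := tau_val k n hn t
  have h3 := s.2
  have h4 := t.2
  rw [Fin.lt_def, Fin.lt_def, h1, h2]
  split_ifs <;> omega

lemma tau_lt_tau_iff_of_le {k n : ℕ} [NeZero k] (hn : n < k) {s t : Fin k} (hs : ¬ n < (s : ℕ)) :
    (tau k n hn t < tau k n hn s) ↔ (s < t ∧ (t : ℕ) ≤ n) := by
  have h1 := tau_val k n hn s
  have h2 := tau_val k n hn t
  have h3 := s.2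
  have h4 := t.2
  rw [Fin.lt_def, Fin.lt_def, h1, h2]
  split_ifs <;> omega

lemma mixEquiv_val {k : ℕ} (D : Fin k → ℕ) (n : ℕ) (hn : n < k) (i : ∀ s, Fin (D s)) :
    ((mixEquiv D n hn i : Fin (∏ s, D s)) : ℕ) = mixIdx D n i := by
  haveI : NeZero k := ⟨by omega⟩
  have hval : ((mixEquiv D n hn i : Fin (∏ s, D s)) : ℕ) = ∑ j : Fin k,
      (i (tau k n hn j) : ℕ) * ∏ j' : Fin (j : ℕ), D (tau k n hn (Fin.castLE j.2.le j')) := rfl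
  rw [hval]
  simp only [prod_tau_lt D n hn]
  have hsum := Fintype.sum_equiv (tau k n hn)
      (fun s => (i s : ℕ) * ∏ t ∈ Finset.univ.filter
        (fun t : Fin k => tau k n hn t < tau k n hn s), D t)
      (fun j => (i (tau k n hn j) : ℕ) *
        ∏ t ∈ Finset.univ.filter (fun t : Fin k => (tau k n hn).symm t < j), D t)
      (fun s => by
        beta_reduce
        rw [tau_symm, congrArg (fun u => ((i u : ℕ))) (tau_tau k n hn s)])
  rw [← hsum]
  rw [mixIdx, Finset.mul_sum,
    ← Finset.sum_filter_add_sum_filter_not Finset.univ (fun s : Fin k => n < (s : ℕ))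
      (fun s => (i s : ℕ) * ∏ t ∈ Finset.univ.filter
        (fun t : Fin k => tau k n hn t < tau k n hn s), D t)]
  congr 1
  · refine Finset.sum_congr rfl ?_
    intro s hs
    simp only [Finset.mem_filter, Finset.mem_univ, true_and] at hs
    rw [Finset.filter_congr (fun t _ => tau_lt_tau_iff_of_gt hn hs)]
    rw [Finset.filter_or, Finset.prod_union]
    · ring
    · simp only [Finset.disjoint_left, Finset.mem_filter, Finset.mem_univ, true_and]
      intro t h1 h2
      rw [Fin.lt_def] at h2
      omega
  · refine Finset.sum_congr ?_ ?_
    · apply Finset.filter_congr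
      intro s _
      simp only [not_lt]
    · intro s hs
      simp only [Finset.mem_filter, Finset.mem_univ, true_and, not_lt] at hs
      rw [Finset.filter_congr (fun t _ => tau_lt_tau_iff_of_le hn (by omega))]
/-- (Unitary invariance of the trace norm of mixed mode unfoldings.)
If `ℬ = 𝒜 ×₁ U^{(1)} ×₂ ⋯ ×_N U^{(N)}` with all `U^{(p)}` unitary, then
`‖𝐁_{(R,n;C,m)}‖_tr = ‖𝐀_{(R,n;C,m)}‖_tr`. -/
theorem stmt_8 (N k l : ℕ) (hN : 2 ≤ N) (hk : 1 ≤ k) (hl : 1 ≤ l)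
    (D : Fin N → ℕ) (U : ∀ p, Matrix (Fin (D p)) (Fin (D p)) ℂ)
    (hU : ∀ p, U p ∈ Matrix.unitaryGroup (Fin (D p)) ℂ)
    (A : (∀ p, Fin (D p)) → ℂ)
    (r : Fin k → Fin N) (c : Fin l → Fin N)
    (hb : Function.Bijective (Sum.elim r c))
    (n m : ℕ) (hn : n < k) (hm : m < l) :
    traceNorm (unfoldAmbient D r c n m (fun i' => ∑ i, A i * ∏ p, U p (i' p) (i p)))
      = traceNorm (unfoldAmbient D r c n m A) := by
  classical
  set B : (∀ p, Fin (D p)) → ℂ := fun i' => ∑ i, A i * ∏ p, U p (i' p) (i p) with hB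
  let e0 : (Fin k ⊕ Fin l) ≃ Fin N := Equiv.ofBijective _ hb
  let g : (∀ p, Fin (D p)) ≃ ((∀ s, Fin (D (r s))) × (∀ s, Fin (D (c s)))) :=
    (Equiv.piCongrLeft' (fun p => Fin (D p)) e0.symm).trans
      (Equiv.sumPiEquivProdPi fun z => Fin (D (e0.symm.symm z)))
  have hg : ∀ i, g i = (fun s => i (r s), fun s => i (c s)) := fun i => rfl
  have hgsr : ∀ (a : ∀ s, Fin (D (r s))) (b : ∀ s, Fin (D (c s))) (s : Fin k),
      (g.symm (a, b)) (r s) = a s := by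
    intro a b s
    have h := hg (g.symm (a, b))
    rw [Equiv.apply_symm_apply] at h
    exact (congrFun (congrArg Prod.fst h) s).symm
  have hgsc : ∀ (a : ∀ s, Fin (D (r s))) (b : ∀ s, Fin (D (c s))) (s : Fin l),
      (g.symm (a, b)) (c s) = b s := by
    intro a b s
    have h := hg (g.symm (a, b))
    rw [Equiv.apply_symm_apply] at h
    exact (congrFun (congrArg Prod.snd h) s).symm
  set T : ((∀ p, Fin (D p)) → ℂ) → Matrix (∀ s, Fin (D (r s))) (∀ s, Fin (D (c s))) ℂ :=
    fun X => Matrix.of fun a b => X (g.symm (a, b)) with hT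
  set eR := mixEquiv (fun s => D (r s)) n hn with heR
  set eC := mixEquiv (fun s => D (c s)) m hm with heC
  have keyR : ∀ (a : ∀ s, Fin (D (r s))) (x : Fin (∏ s, D (r s))),
      mixIdx (fun s => D (r s)) n a = (x : ℕ) ↔ a = eR.symm x := by
    intro a x
    rw [← mixEquiv_val (fun s => D (r s)) n hn a, ← heR, Fin.val_eq_val,
      Equiv.apply_eq_iff_eq_symm_apply]
  have keyC : ∀ (b : ∀ s, Fin (D (c s))) (y : Fin (∏ s, D (c s))),
      mixIdx (fun s => D (c s)) m b = (y : ℕ) ↔ b = eC.symm y := by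
    intro b y
    rw [← mixEquiv_val (fun s => D (c s)) m hm b, ← heC, Fin.val_eq_val,
      Equiv.apply_eq_iff_eq_symm_apply]
  have hunfold : ∀ X : (∀ p, Fin (D p)) → ℂ,
      unfoldAmbient D r c n m X = (T X).submatrix eR.symm eC.symm := by
    intro X
    ext x y
    show (∑ i : ∀ p, Fin (D p), if mixIdx (fun s => D (r s)) n (fun s => i (r s)) = (x : ℕ) ∧
        mixIdx (fun s => D (c s)) m (fun s => i (c s)) = (y : ℕ) then X i else 0)
      = X (g.symm (eR.symm x, eC.symm y))
    have hiff : ∀ i : ∀ p, Fin (D p),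
        (mixIdx (fun s => D (r s)) n (fun s => i (r s)) = (x : ℕ) ∧
          mixIdx (fun s => D (c s)) m (fun s => i (c s)) = (y : ℕ)) ↔
        i = g.symm (eR.symm x, eC.symm y) := by
      intro i
      rw [keyR, keyC, ← Prod.mk.injEq, ← hg i]
      exact Equiv.apply_eq_iff_eq_symm_apply g
    calc (∑ i : ∀ p, Fin (D p), if mixIdx (fun s => D (r s)) n (fun s => i (r s)) = (x : ℕ) ∧
          mixIdx (fun s => D (c s)) m (fun s => i (c s)) = (y : ℕ) then X i else 0)
        = ∑ i : ∀ p, Fin (D p), if i = g.symm (eR.symm x, eC.symm y) then X i else 0 :=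
          Finset.sum_congr rfl (fun i _ => if_congr (hiff i) rfl rfl)
      _ = X (g.symm (eR.symm x, eC.symm y)) := by
          rw [Finset.sum_ite_eq' Finset.univ (g.symm (eR.symm x, eC.symm y)) X,
            if_pos (Finset.mem_univ _)]
  set UR : Matrix (∀ s, Fin (D (r s))) (∀ s, Fin (D (r s))) ℂ :=
    Matrix.of fun a a' => ∏ s, U (r s) (a s) (a' s) with hUR
  set UC : Matrix (∀ s, Fin (D (c s))) (∀ s, Fin (D (c s))) ℂ :=
    Matrix.of fun b b' => ∏ s, U (c s) (b s) (b' s) with hUC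
  have he0l : ∀ s : Fin k, e0 (Sum.inl s) = r s := fun _ => rfl
  have he0r : ∀ s : Fin l, e0 (Sum.inr s) = c s := fun _ => rfl
  have hprod : ∀ (j j' : ∀ p, Fin (D p)),
      (∏ p, U p (j p) (j' p)) =
        (∏ s, U (r s) (j (r s)) (j' (r s))) * ∏ s, U (c s) (j (c s)) (j' (c s)) := by
    intro j j'
    rw [← Equiv.prod_comp e0 (fun p => U p (j p) (j' p))]
    rw [Fintype.prod_sum_type]
    rfl
  have hTB : T B = UR * T A * UCᵀ := by
    ext a b
    show B (g.symm (a, b)) = _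
    rw [hB]
    simp only
    rw [← Equiv.sum_comp g.symm
      (fun i => A i * ∏ p, U p ((g.symm (a, b)) p) (i p)), Fintype.sum_prod_type]
    rw [Matrix.mul_apply]
    simp only [Matrix.mul_apply, Matrix.transpose_apply, Finset.sum_mul, Finset.mul_sum]
    rw [Finset.sum_comm]
    refine Finset.sum_congr rfl fun b' _ => Finset.sum_congr rfl fun a' _ => ?_
    rw [hprod]
    simp only [hT, hUR, hUC, Matrix.of_apply]
    have h1 : ∀ s : Fin k, (g.symm (a, b)) (r s) = a s := hgsr a b
    have h2 : ∀ s : Fin l, (g.symm (a, b)) (c s) = b s := hgsc a b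
    have h3 : ∀ s : Fin k, (g.symm (a', b')) (r s) = a' s := hgsr a' b'
    have h4 : ∀ s : Fin l, (g.symm (a', b')) (c s) = b' s := hgsc a' b'
    calc A (g.symm (a', b')) * ((∏ s, U (r s) ((g.symm (a, b)) (r s)) ((g.symm (a', b')) (r s))) *
          ∏ s, U (c s) ((g.symm (a, b)) (c s)) ((g.symm (a', b')) (c s)))
        = A (g.symm (a', b')) * ((∏ s, U (r s) (a s) (a' s)) * ∏ s, U (c s) (b s) (b' s)) := by
          simp only [h1, h2, h3, h4]
      _ = (∏ s, U (r s) (a s) (a' s)) * A (g.symm (a', b')) * ∏ s, U (c s) (b s) (b' s) := by ring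
  have hone : ∀ {ι : Type} [Fintype ι] [DecidableEq ι] (DD : ι → ℕ)
      (a a'' : ∀ s : ι, Fin (DD s)),
      (∏ s, (1 : Matrix (Fin (DD s)) (Fin (DD s)) ℂ) (a s) (a'' s)) =
        (1 : Matrix (∀ s, Fin (DD s)) (∀ s, Fin (DD s)) ℂ) a a'' := by
    intro ι _ _ DD a a''
    by_cases haa : a = a''
    · subst haa
      simp [Matrix.one_apply]
    · rw [Matrix.one_apply_ne haa]
      obtain ⟨s, hs⟩ := Function.ne_iff.mp haa
      exact Finset.prod_eq_zero (Finset.mem_univ s) (Matrix.one_apply_ne hs)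
  have hURu : URᴴ * UR = 1 := by
    ext a a''
    rw [Matrix.mul_apply]
    simp only [Matrix.conjTranspose_apply, hUR, Matrix.of_apply, star_prod]
    have : ∀ a' : ∀ s, Fin (D (r s)),
        (∏ s, star (U (r s) (a' s) (a s))) * ∏ s, U (r s) (a' s) (a'' s) =
          ∏ s, (star (U (r s) (a' s) (a s)) * U (r s) (a' s) (a'' s)) := by
      intro a'
      rw [← Finset.prod_mul_distrib]
    simp only [this]
    rw [← Fintype.prod_sum (fun (s : Fin k) (x : Fin (D (r s))) =>
      star (U (r s) x (a s)) * U (r s) x (a'' s))]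
    have hmid : ∀ s : Fin k, (∑ x, star (U (r s) x (a s)) * U (r s) x (a'' s)) =
        (1 : Matrix (Fin (D (r s))) (Fin (D (r s))) ℂ) (a s) (a'' s) := by
      intro s
      have h5 : star (U (r s)) * U (r s) = 1 := (hU (r s)).1
      calc (∑ x, star (U (r s) x (a s)) * U (r s) x (a'' s))
          = (star (U (r s)) * U (r s)) (a s) (a'' s) := by
            rw [Matrix.mul_apply]
            exact Finset.sum_congr rfl fun x _ => by
              rw [Matrix.star_eq_conjTranspose, Matrix.conjTranspose_apply]
        _ = (1 : Matrix (Fin (D (r s))) (Fin (D (r s))) ℂ) (a s) (a'' s) := by rw [h5]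
    simp only [hmid]
    exact hone (fun s => D (r s)) a a''
  have hUCu : UCᴴ * UC = 1 := by
    ext b b''
    rw [Matrix.mul_apply]
    simp only [Matrix.conjTranspose_apply, hUC, Matrix.of_apply, star_prod]
    have : ∀ b' : ∀ s, Fin (D (c s)),
        (∏ s, star (U (c s) (b' s) (b s))) * ∏ s, U (c s) (b' s) (b'' s) =
          ∏ s, (star (U (c s) (b' s) (b s)) * U (c s) (b' s) (b'' s)) := by
      intro b'
      rw [← Finset.prod_mul_distrib]
    simp only [this]
    rw [← Fintype.prod_sum (fun (s : Fin l) (x : Fin (D (c s))) =>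
      star (U (c s) x (b s)) * U (c s) x (b'' s))]
    have hmid : ∀ s : Fin l, (∑ x, star (U (c s) x (b s)) * U (c s) x (b'' s)) =
        (1 : Matrix (Fin (D (c s))) (Fin (D (c s))) ℂ) (b s) (b'' s) := by
      intro s
      have h5 : star (U (c s)) * U (c s) = 1 := (hU (c s)).1
      calc (∑ x, star (U (c s) x (b s)) * U (c s) x (b'' s))
          = (star (U (c s)) * U (c s)) (b s) (b'' s) := by
            rw [Matrix.mul_apply]
            exact Finset.sum_congr rfl fun x _ => by
              rw [Matrix.star_eq_conjTranspose, Matrix.conjTranspose_apply]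
        _ = (1 : Matrix (Fin (D (c s))) (Fin (D (c s))) ℂ) (b s) (b'' s) := by rw [h5]
    simp only [hmid]
    exact hone (fun s => D (c s)) b b''
  have hVu : UCᵀ * (UCᵀ)ᴴ = 1 := by
    have h2 : (UCᵀ)ᴴ = (UCᴴ)ᵀ := by
      ext z w
      simp [Matrix.conjTranspose_apply]
    rw [h2, ← Matrix.transpose_mul, hUCu, Matrix.transpose_one]
  rw [hunfold A, hunfold B, traceNorm_submatrix, traceNorm_submatrix, hTB]
  exact traceNorm_mul_mul UR UCᵀ hURu hVu (T A)
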